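/- Let N be a Nijenhuis operator on a pre-Lie algebra (g, ·). Then for every natural number l, N^l is also a Nijenhuis operator on the deformed pre-Lie algebra (g, ·_{N^k}) for each k, and the pre-Lie algebras (g, (·_{N^k})_{N^l}) and (g, ·_{N^{k+l}}) coincide. -/
import Mathlib

def PreLieFn {g : Type*} [AddCommGroup g] (m : g → g → g) : Prop :=
  ∀ x y z : g, m (m x y) z - m x (m y z) = m (m y x) z - m y (m x z)

def NijFn {g : Type*} [AddCommGroup g] (m : g → g → g) (N : g → g) : Prop :=
  ∀ x y : g, m (N x) (N y) = N (m (N x) y + m x (N y) - N (m x y))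

def deform {g : Type*} [AddCommGroup g] (m : g → g → g) (N : g → g) : g → g → g :=
  fun x y => m (N x) y + m x (N y) - N (m x y)

section Helpers

variable {K g : Type*} [Field K] [AddCommGroup g] [Module K g]

/-- Compatibility of two operators w.r.t. `m`. -/
private def Cp (m : g →ₗ[K] g →ₗ[K] g) (A B : Module.End K g) : Prop :=
  ∀ x y : g, m (A x) (B y) + m (B x) (A y)
    = A (m (B x) y + m x (B y) - B (m x y)) + B (m (A x) y + m x (A y) - A (m x y))

variable {m : g →ₗ[K] g →ₗ[K] g} {N : Module.End K g}

private theorem cp_symm {A B : Module.End K g} (h : Cp m A B) : Cp m B A := fun x y => by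
  have hx := h x y
  linear_combination (norm := module) hx

private theorem cp_N_one : Cp m N 1 := fun x y => by
  simp only [Module.End.one_apply, map_add, map_sub]
  abel

private theorem cp_one_left {B : Module.End K g} : Cp m 1 B := fun x y => by
  simp only [Module.End.one_apply, map_add, map_sub]
  abel

private theorem cp_N_mul
    (hN : ∀ x y : g, m (N x) (N y) = N (m (N x) y + m x (N y) - N (m x y)))
    {B : Module.End K g} (hB : Cp m N B) : Cp m N (N * B) := fun x y => by
  have h1 := hN x (B y)
  have h2 := hN (B x) y
  have h3 := congrArg (⇑N) (hB x y)
  simp only [Module.End.mul_apply, map_add, map_sub] at h1 h2 h3 ⊢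
  linear_combination (norm := module) h1 + h2 + h3

private theorem cp_N_pow
    (hN : ∀ x y : g, m (N x) (N y) = N (m (N x) y + m x (N y) - N (m x y))) :
    ∀ j, Cp m N (N ^ j)
  | 0 => by rw [pow_zero]; exact cp_N_one
  | (j + 1) => by rw [pow_succ']; exact cp_N_mul hN (cp_N_pow hN j)

private theorem cp_mul_left {A B : Module.End K g}
    (hNB : Cp m N B) (hNBA : Cp m N (B * A)) (hAB : Cp m A B) (hAN : Cp m A N) :
    Cp m (N * A) B := fun x y => by
  have h1 := hNB (A x) y
  have h2 := hNB x (A y)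
  have h3 := hNBA x y
  have h4 := congrArg (⇑N) (hAB x y)
  have h5 := congrArg (⇑B) (hAN x y)
  simp only [Module.End.mul_apply, map_add, map_sub] at h1 h2 h3 h4 h5 ⊢
  linear_combination (norm := module) h1 + h2 - h3 + h4 + h5

private theorem cp_pow_pow
    (hN : ∀ x y : g, m (N x) (N y) = N (m (N x) y + m x (N y) - N (m x y))) :
    ∀ i j, Cp m (N ^ i) (N ^ j)
  | 0, j => by rw [pow_zero]; exact cp_one_left
  | (i + 1), j => by
      rw [pow_succ']
      refine cp_mul_left (cp_N_pow hN j) ?_ (cp_pow_pow hN i j) (cp_symm (cp_N_pow hN i))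
      rw [← pow_add]
      exact cp_N_pow hN (j + i)

private theorem nij_mul
    (hN : ∀ x y : g, m (N x) (N y) = N (m (N x) y + m x (N y) - N (m x y)))
    {B : Module.End K g}
    (hB : ∀ x y : g, m (B x) (B y) = B (m (B x) y + m x (B y) - B (m x y)))
    (hC : Cp m (N * B) B) :
    ∀ x y : g, m ((N * B) x) ((N * B) y)
      = (N * B) (m ((N * B) x) y + m x ((N * B) y) - (N * B) (m x y)) := fun x y => by
  have h1 := hN (B x) (B y)
  have h2 := congrArg (⇑N) (hC x y)
  have h3 := congrArg (fun z : g => N (N z)) (hB x y)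
  simp only [Module.End.mul_apply, map_add, map_sub] at h1 h2 h3 ⊢
  linear_combination (norm := module) h1 + h2 - h3

private theorem nij_pow
    (hN : ∀ x y : g, m (N x) (N y) = N (m (N x) y + m x (N y) - N (m x y))) :
    ∀ l, ∀ x y : g,
      m ((N ^ l) x) ((N ^ l) y)
        = (N ^ l) (m ((N ^ l) x) y + m x ((N ^ l) y) - (N ^ l) (m x y))
  | 0 => by
      intro x y
      simp only [pow_zero, Module.End.one_apply]
      abel
  | (l + 1) => by
      rw [pow_succ']
      refine nij_mul hN (nij_pow hN l) ?_
      rw [← pow_succ']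
      exact cp_pow_pow hN (l + 1) l

end Helpers

/-- for a Nijenhuis operator `N` on a pre-Lie algebra, each power
`N^l` is a Nijenhuis operator on the deformed pre-Lie algebra `(g, ·_{N^k})`,
and `(·_{N^k})_{N^l}` coincides with `·_{N^{k+l}}`. -/
theorem power_nijenhuis_deform {K g : Type*} [Field K] [AddCommGroup g] [Module K g]
    (m : g →ₗ[K] g →ₗ[K] g) (hm : PreLieFn (fun x y => m x y))
    (N : Module.End K g) (hN : NijFn (fun x y => m x y) N) :
    ∀ k l : ℕ,
      NijFn (deform (fun x y => m x y) (fun a : g => (N ^ k) a)) (fun a : g => (N ^ l) a) ∧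
      (∀ x y : g, deform (deform (fun x y => m x y) (fun a : g => (N ^ k) a)) (fun a : g => (N ^ l) a) x y =
        deform (fun x y => m x y) (fun a : g => (N ^ (k + l)) a) x y) := by
  have hN' : ∀ x y : g, m (N x) (N y) = N (m (N x) y + m x (N y) - N (m x y)) := hN
  intro k l
  constructor
  · intro x y
    have ha := cp_pow_pow hN' l (k + l) x y
    have hb := congrArg (⇑(N ^ l)) (cp_pow_pow hN' l k x y)
    have hc := congrArg (⇑(N ^ k)) (nij_pow hN' l x y)
    simp only [deform, pow_add, Module.End.mul_apply, map_add, map_sub] at ha hb hc ⊢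
    linear_combination (norm := module) ha - hb - hc
  · intro x y
    have h := cp_pow_pow hN' l k x y
    simp only [deform, pow_add, Module.End.mul_apply, map_add, map_sub] at h ⊢
    linear_combination (norm := module) h
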